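/- arXiv:1509.00976 — 3 statements merged into one kernel-verified Lean document; each statement's English description precedes it below -/
import Mathlib

section
/- Let (Ω, μ) be a probability space and let P : Ω → ℝ be a nonnegative random variable such that √P is integrable and √P · arctan(b·√P) is integrable, where b = √s / r₀² for given positive reals s and r₀. Then for every λ > 0: exp(−π·λ·√s · E[√P · arctan(b·√P)]) ≤ exp(−π·λ·√s · E[√P] · arctan(b · E[√P])). In particular the Laplace-transform expression exp(−πλ√s E[√P arctan(√(s/r₀⁴)·√P)]) is upper-bounded by exp(−πλ√s·E[√P]·arctan(E[√P]·√(s/r₀⁴))). -/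
open Real MeasureTheory

lemma aux_hasDerivAt_f (b x : ℝ) :
    HasDerivAt (fun y => y * Real.arctan (b * y))
      (Real.arctan (b * x) + b * x / (1 + (b * x) ^ 2)) x := by
  have h1 : HasDerivAt (fun y : ℝ => b * y) b x := by
    simpa using (hasDerivAt_id x).const_mul b
  have h2 : HasDerivAt (fun y : ℝ => Real.arctan (b * y))
      (1 / (1 + (b * x) ^ 2) * b) x :=
    (Real.hasDerivAt_arctan (b * x)).comp x h1
  have := (hasDerivAt_id x).mul h2
  refine this.congr_deriv ?_
  have hpos : (0:ℝ) < 1 + (b * x) ^ 2 := by positivity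
  simp only [id]
  field_simp

lemma aux_hasDerivAt_g (b x : ℝ) :
    HasDerivAt (fun y => Real.arctan (b * y) + b * y / (1 + (b * y) ^ 2))
      (2 * b / (1 + (b * x) ^ 2) ^ 2) x := by
  have h1 : HasDerivAt (fun y : ℝ => b * y) b x := by
    simpa using (hasDerivAt_id x).const_mul b
  have h2 : HasDerivAt (fun y : ℝ => Real.arctan (b * y))
      (1 / (1 + (b * x) ^ 2) * b) x :=
    (Real.hasDerivAt_arctan (b * x)).comp x h1
  have hden : HasDerivAt (fun y : ℝ => 1 + (b * y) ^ 2) (2 * (b * x) * b) x := by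
    refine ((hasDerivAt_const x (1:ℝ)).add ((h1.pow 2))).congr_deriv ?_
    simp
  have hne : (1 + (b * x) ^ 2) ≠ 0 := by positivity
  have h3 := h1.div hden hne
  have := h2.add h3
  refine this.congr_deriv ?_
  have hpos : (0:ℝ) < 1 + (b * x) ^ 2 := by positivity
  field_simp
  ring

lemma aux_convex_f {b : ℝ} (hb : 0 ≤ b) :
    ConvexOn ℝ Set.univ (fun y => y * Real.arctan (b * y)) := by
  have hdf : deriv (fun y => y * Real.arctan (b * y)) =
      fun x => Real.arctan (b * x) + b * x / (1 + (b * x) ^ 2) := by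
    funext x; exact (aux_hasDerivAt_f b x).deriv
  apply convexOn_univ_of_deriv2_nonneg
  · exact fun x => (aux_hasDerivAt_f b x).differentiableAt
  · rw [hdf]; exact fun x => (aux_hasDerivAt_g b x).differentiableAt
  · intro x
    have h2 : deriv^[2] (fun y => y * Real.arctan (b * y)) x
        = deriv (deriv (fun y => y * Real.arctan (b * y))) x := rfl
    rw [h2, hdf, (aux_hasDerivAt_g b x).deriv]
    positivity

/-- Proposition 1 (Jensen bound on the Laplace transform of uplink intra-mode interference
seen by cell-edge users, η = 4): with `b = √s / r₀²`,
`exp(−πλ√s · E[√P · arctan(b√P)]) ≤ exp(−πλ√s · E[√P] · arctan(b · E[√P]))`. -/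
theorem laplace_jensen_bound {Ω : Type*} [MeasurableSpace Ω] (μ : Measure Ω)
    [IsProbabilityMeasure μ] (P : Ω → ℝ) (hP : ∀ ω, 0 ≤ P ω)
    (s r₀ lam : ℝ) (hs : 0 < s) (hr₀ : 0 < r₀) (hlam : 0 < lam)
    (hint1 : Integrable (fun ω => Real.sqrt (P ω)) μ)
    (hint2 : Integrable
      (fun ω => Real.sqrt (P ω) *
        Real.arctan (Real.sqrt s / r₀ ^ 2 * Real.sqrt (P ω))) μ) :
    Real.exp (-(Real.pi * lam * Real.sqrt s) *
        ∫ ω, Real.sqrt (P ω) * Real.arctan (Real.sqrt s / r₀ ^ 2 * Real.sqrt (P ω)) ∂μ) ≤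
      Real.exp (-(Real.pi * lam * Real.sqrt s) *
        ((∫ ω, Real.sqrt (P ω) ∂μ) *
          Real.arctan (Real.sqrt s / r₀ ^ 2 * ∫ ω, Real.sqrt (P ω) ∂μ))) := by
  set b : ℝ := Real.sqrt s / r₀ ^ 2 with hbdef
  have hb : 0 ≤ b := by positivity
  have hconv := aux_convex_f hb
  have hcont : ContinuousOn (fun y => y * Real.arctan (b * y)) Set.univ :=
    (Differentiable.continuous fun x => (aux_hasDerivAt_f b x).differentiableAt).continuousOn
  have hjensen := hconv.map_integral_le hcont isClosed_univ
    (Filter.Eventually.of_forall fun ω => Set.mem_univ _) hint1 (by exact hint2)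
  have hc : 0 ≤ Real.pi * lam * Real.sqrt s := by positivity
  apply Real.exp_le_exp.mpr
  have := mul_le_mul_of_nonneg_left hjensen hc
  nlinarith [this]
end

section
/- Let λ, ρ, P_M be positive reals and η > 2, and set T = π·λ·(P_M/ρ)^{2/η}. Then ∫₀^∞ (min(ρ·r^η, P_M))^{2/η} · 2πλ·r·e^{−πλr²} dr = (ρ^{2/η}/(πλ)) · (1 − (1 + T)·e^{−T}) + P_M^{2/η} · e^{−T}. -/
open Real MeasureTheory Filter Set

/-- Equation (16) of the paper: the fractional moment `E[P_u^{2/η}]` of the uplink transmit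
power `P_u = min(ρ r^η, P_M)` under Rayleigh nearest-BS distance density `2πλ r e^{−πλr²}`,
with `T = πλ (P_M/ρ)^{2/η}`, equals
`ρ^{2/η}/(πλ) · (1 − (1+T) e^{−T}) + P_M^{2/η} e^{−T}`. -/
theorem fractional_moment_uplink_power (lam ρ P_M η : ℝ)
    (hlam : 0 < lam) (hρ : 0 < ρ) (hPM : 0 < P_M) (hη : 2 < η) :
    ∫ r in Set.Ioi (0 : ℝ),
        (min (ρ * r ^ η) P_M) ^ (2 / η) *
          (2 * Real.pi * lam * r * Real.exp (-(Real.pi * lam * r ^ 2))) =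
      ρ ^ (2 / η) / (Real.pi * lam) *
          (1 - (1 + Real.pi * lam * (P_M / ρ) ^ (2 / η)) *
            Real.exp (-(Real.pi * lam * (P_M / ρ) ^ (2 / η)))) +
        P_M ^ (2 / η) * Real.exp (-(Real.pi * lam * (P_M / ρ) ^ (2 / η))) := by
  have hη0 : (0:ℝ) < η := by linarith
  set c := Real.pi * lam with hc_def
  have hc : 0 < c := mul_pos Real.pi_pos hlam
  have hq : 0 < P_M / ρ := div_pos hPM hρ
  set r0 : ℝ := (P_M / ρ) ^ (1/η) with hr0_def
  have hr0 : 0 < r0 := Real.rpow_pos_of_pos hq _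
  have hr0η : r0 ^ η = P_M / ρ := by
    rw [hr0_def, ← Real.rpow_mul hq.le, one_div_mul_cancel hη0.ne', Real.rpow_one]
  have hr0sq : r0 ^ (2:ℕ) = (P_M/ρ) ^ (2/η) := by
    rw [hr0_def, ← Real.rpow_natCast _ 2, ← Real.rpow_mul hq.le]
    congr 1
    push_cast
    ring
  -- pointwise identities on the two pieces
  set f : ℝ → ℝ := fun r =>
    (min (ρ * r ^ η) P_M) ^ (2 / η) *
      (2 * Real.pi * lam * r * Real.exp (-(Real.pi * lam * r ^ 2))) with hf_def
  have hf1 : ∀ r ∈ Set.Ioc (0:ℝ) r0,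
      f r = ρ ^ (2/η) * (2 * c * r ^ 3 * Real.exp (-(c * r ^ 2))) := by
    intro r hr
    obtain ⟨hr1, hr2⟩ := hr
    have hle : ρ * r ^ η ≤ P_M := by
      have h1 : r ^ η ≤ r0 ^ η := Real.rpow_le_rpow hr1.le hr2 hη0.le
      rw [hr0η] at h1
      calc ρ * r ^ η ≤ ρ * (P_M / ρ) := by nlinarith
        _ = P_M := by field_simp
    have hrη : (0:ℝ) < r ^ η := Real.rpow_pos_of_pos hr1 _
    have hmin : min (ρ * r ^ η) P_M = ρ * r ^ η := min_eq_left hle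
    have hpow : (ρ * r ^ η) ^ (2/η) = ρ ^ (2/η) * r ^ (2:ℕ) := by
      rw [Real.mul_rpow hρ.le hrη.le, ← Real.rpow_natCast r 2,
        ← Real.rpow_mul hr1.le]
      congr 2
      field_simp
      norm_num
    rw [hf_def]
    simp only [hmin, hpow]
    rw [hc_def]
    ring
  have hf2 : ∀ r ∈ Set.Ioi r0,
      f r = P_M ^ (2/η) * (2 * c * r * Real.exp (-(c * r ^ 2))) := by
    intro r hr
    have hr1 : 0 < r := hr0.trans hr
    have hle : P_M ≤ ρ * r ^ η := by
      have h1 : r0 ^ η ≤ r ^ η := Real.rpow_le_rpow hr0.le (le_of_lt hr) hη0.le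
      rw [hr0η] at h1
      calc P_M = ρ * (P_M / ρ) := by field_simp
        _ ≤ ρ * r ^ η := by nlinarith
    have hmin : min (ρ * r ^ η) P_M = P_M := min_eq_right hle
    rw [hf_def]
    simp only [hmin]
    rw [hc_def]
    ring
  -- derivative facts
  have hexp : ∀ x : ℝ, HasDerivAt (fun x : ℝ => Real.exp (-(c * x ^ 2)))
      (Real.exp (-(c * x ^ 2)) * (-(c * (2 * x)))) x := by
    intro x
    have hx2 : HasDerivAt (fun x : ℝ => c * x ^ 2) (c * (2 * x)) x := by
      simpa using (hasDerivAt_pow 2 x).const_mul c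
    exact hx2.neg.exp
  -- first piece: interval integral
  have hderiv1 : ∀ x : ℝ, HasDerivAt
      (fun x : ℝ => -(x ^ 2 + 1/c) * Real.exp (-(c * x ^ 2)))
      (2 * c * x ^ 3 * Real.exp (-(c * x ^ 2))) x := by
    intro x
    have h1 : HasDerivAt (fun x : ℝ => -(x ^ 2 + 1/c)) (-(2 * x)) x := by
      exact (((hasDerivAt_pow 2 x).add_const (1/c)).neg).congr_deriv (by norm_num)
    have := h1.mul (hexp x)
    exact this.congr_deriv (by field_simp; ring)
  have hexpc : Continuous fun x : ℝ => Real.exp (-(c * x ^ 2)) :=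
    Real.continuous_exp.comp (continuous_const.mul (continuous_pow 2)).neg
  have hcont1 : Continuous fun x : ℝ => 2 * c * x ^ 3 * Real.exp (-(c * x ^ 2)) :=
    (continuous_const.mul (continuous_pow 3)).mul hexpc
  have key1 : ∫ r in (0:ℝ)..r0, 2 * c * r ^ 3 * Real.exp (-(c * r ^ 2)) =
      1/c - (r0 ^ 2 + 1/c) * Real.exp (-(c * r0 ^ 2)) := by
    rw [intervalIntegral.integral_eq_sub_of_hasDerivAt
      (fun x _ => hderiv1 x) (hcont1.intervalIntegrable 0 r0)]
    simp [Real.exp_zero]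
    ring
  -- second piece: improper integral
  have hderiv2 : ∀ x : ℝ, HasDerivAt
      (fun x : ℝ => -(P_M ^ (2/η)) * Real.exp (-(c * x ^ 2)))
      (P_M ^ (2/η) * (2 * c * x * Real.exp (-(c * x ^ 2)))) x := by
    intro x
    have := (hexp x).const_mul (-(P_M ^ (2/η)))
    exact this.congr_deriv (by ring)
  have htend : Tendsto (fun x : ℝ => -(P_M ^ (2/η)) * Real.exp (-(c * x ^ 2)))
      atTop (nhds 0) := by
    have h1 : Tendsto (fun x : ℝ => c * x ^ 2) atTop atTop :=
      (tendsto_pow_atTop two_ne_zero).const_mul_atTop hc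
    have h2 : Tendsto (fun x : ℝ => Real.exp (-(c * x ^ 2))) atTop (nhds 0) :=
      Real.tendsto_exp_atBot.comp (tendsto_neg_atTop_atBot.comp h1)
    simpa using h2.const_mul (-(P_M ^ (2/η)))
  have hcont2 : ContinuousWithinAt
      (fun x : ℝ => -(P_M ^ (2/η)) * Real.exp (-(c * x ^ 2))) (Set.Ici r0) r0 := by
    exact (continuous_const.mul hexpc).continuousWithinAt
  have hnonneg2 : ∀ x ∈ Set.Ioi r0,
      0 ≤ P_M ^ (2/η) * (2 * c * x * Real.exp (-(c * x ^ 2))) := by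
    intro x hx
    have hx1 : 0 < x := hr0.trans hx
    positivity
  have key2 : ∫ r in Set.Ioi r0, P_M ^ (2/η) * (2 * c * r * Real.exp (-(c * r ^ 2))) =
      P_M ^ (2/η) * Real.exp (-(c * r0 ^ 2)) := by
    rw [MeasureTheory.integral_Ioi_of_hasDerivAt_of_nonneg hcont2
      (fun x hx => hderiv2 x) hnonneg2 htend]
    ring
  have hint2 : IntegrableOn
      (fun r => P_M ^ (2/η) * (2 * c * r * Real.exp (-(c * r ^ 2)))) (Set.Ioi r0) :=
    MeasureTheory.integrableOn_Ioi_deriv_of_nonneg hcont2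
      (fun x hx => hderiv2 x) hnonneg2 htend
  -- integrability of f on the pieces
  have hintf1 : IntegrableOn f (Set.Ioc 0 r0) := by
    apply MeasureTheory.IntegrableOn.congr_fun _ (fun r hr => (hf1 r hr).symm)
      measurableSet_Ioc
    exact ((hcont1.const_smul (ρ ^ (2/η))).integrableOn_Ioc).mono_set (subset_refl _)
  have hintf2 : IntegrableOn f (Set.Ioi r0) :=
    hint2.congr_fun (fun r hr => (hf2 r hr).symm) measurableSet_Ioi
  -- split the integral
  have hsplit : ∫ r in Set.Ioi (0:ℝ), f r =
      (∫ r in Set.Ioc (0:ℝ) r0, f r) + ∫ r in Set.Ioi r0, f r := by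
    rw [← MeasureTheory.setIntegral_union (Set.Ioc_disjoint_Ioi le_rfl)
      measurableSet_Ioi hintf1 hintf2, Set.Ioc_union_Ioi_eq_Ioi hr0.le]
  have e1 : ∫ r in Set.Ioc (0:ℝ) r0, f r =
      ρ ^ (2/η) * (1/c - (r0 ^ 2 + 1/c) * Real.exp (-(c * r0 ^ 2))) := by
    rw [MeasureTheory.setIntegral_congr_fun measurableSet_Ioc hf1,
      ← intervalIntegral.integral_of_le hr0.le,
      intervalIntegral.integral_const_mul, key1]
  have e2 : ∫ r in Set.Ioi r0, f r = P_M ^ (2/η) * Real.exp (-(c * r0 ^ 2)) := by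
    rw [MeasureTheory.setIntegral_congr_fun measurableSet_Ioi hf2, key2]
  show ∫ r in Set.Ioi (0:ℝ), f r = _
  rw [hsplit, e1, e2]
  rw [← hr0sq]
  field_simp
  ring
end

section
/- Let B_u, B, θ, λ, ρ, P_d be positive reals, let α ∈ (0, 1], and let c₀, c₁ ≥ 0. Define U(x) = √x·arctan(√x), K = (π²·λ/2)·√(θ·P_d/ρ), and the effective rates ℰ₁ = (B_u + α·B)·log₂(1 + θ)·exp(−U(θ) − K·c₁) and ℰ₀ = B_u·log₂(1 + θ)·exp(−U(θ) − K·c₀). Then ℰ₁ > ℰ₀ if and only if √(ρ/P_d) > π²·λ·√θ·(c₁ − c₀) / (2·ln((B_u + α·B)/B_u)). -/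
open Real

/-- The α-duplex uplink rate-gain condition of Section III-F (equation (42)): with
`U(x) = √x arctan √x` and `K = (π²λ/2)√(θ P_d/ρ)`, the α-duplex effective uplink rate
`ℰ₁ = (B_u + αB) log₂(1+θ) exp(−U(θ) − K c₁)` exceeds the half-duplex rate
`ℰ₀ = B_u log₂(1+θ) exp(−U(θ) − K c₀)` iff
`√(ρ/P_d) > π²λ√θ (c₁ − c₀) / (2 ln((B_u + αB)/B_u))`. -/
theorem alpha_duplex_rate_gain_condition (B_u B θ lam ρ P_d α c₀ c₁ : ℝ)
    (hBu : 0 < B_u) (hB : 0 < B) (hθ : 0 < θ) (hlam : 0 < lam) (hρ : 0 < ρ)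
    (hPd : 0 < P_d) (hα : α ∈ Set.Ioc (0 : ℝ) 1) (hc₀ : 0 ≤ c₀) (hc₁ : 0 ≤ c₁) :
    ((B_u + α * B) * Real.logb 2 (1 + θ) *
        Real.exp (-(Real.sqrt θ * Real.arctan (Real.sqrt θ))
          - Real.pi ^ 2 * lam / 2 * Real.sqrt (θ * P_d / ρ) * c₁) >
      B_u * Real.logb 2 (1 + θ) *
        Real.exp (-(Real.sqrt θ * Real.arctan (Real.sqrt θ))
          - Real.pi ^ 2 * lam / 2 * Real.sqrt (θ * P_d / ρ) * c₀)) ↔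
    Real.sqrt (ρ / P_d) >
      Real.pi ^ 2 * lam * Real.sqrt θ * (c₁ - c₀) /
        (2 * Real.log ((B_u + α * B) / B_u)) := by
  obtain ⟨hα0, hα1⟩ := hα
  have hA : 0 < B_u + α * B := by positivity
  have hL : 0 < Real.logb 2 (1 + θ) := Real.logb_pos one_lt_two (by linarith)
  have hs : 0 < Real.sqrt (ρ / P_d) := Real.sqrt_pos.2 (by positivity)
  have hR : 1 < (B_u + α * B) / B_u := by
    rw [lt_div_iff₀ hBu]; nlinarith
  have hlogR : 0 < Real.log ((B_u + α * B) / B_u) := Real.log_pos hR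
  have hK : Real.sqrt (θ * P_d / ρ) = Real.sqrt θ / Real.sqrt (ρ / P_d) := by
    rw [eq_div_iff hs.ne', ← Real.sqrt_mul (by positivity : (0:ℝ) ≤ θ * P_d / ρ)]
    congr 1
    field_simp
  rw [gt_iff_lt, mul_right_comm B_u, mul_right_comm (B_u + α * B), mul_lt_mul_iff_of_pos_right hL,
    ← Real.log_lt_log_iff (by positivity) (by positivity),
    Real.log_mul hBu.ne' (Real.exp_ne_zero _),
    Real.log_mul hA.ne' (Real.exp_ne_zero _),
    Real.log_exp, Real.log_exp, hK, gt_iff_lt,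
    div_lt_iff₀ (by positivity)]
  have hlogdiv : Real.log ((B_u + α * B) / B_u) = Real.log (B_u + α * B) - Real.log B_u :=
    Real.log_div hA.ne' hBu.ne'
  have e : Real.pi ^ 2 * lam / 2 * (Real.sqrt θ / Real.sqrt (ρ / P_d)) * (c₁ - c₀) =
      Real.pi ^ 2 * lam * Real.sqrt θ * (c₁ - c₀) / (2 * Real.sqrt (ρ / P_d)) := by
    field_simp
  constructor
  · intro h
    have h2 : Real.pi ^ 2 * lam / 2 * (Real.sqrt θ / Real.sqrt (ρ / P_d)) * (c₁ - c₀) <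
        Real.log (B_u + α * B) - Real.log B_u := by linarith
    rw [e, div_lt_iff₀ (by positivity)] at h2
    rw [hlogdiv]
    linarith
  · intro h
    have h2 : Real.pi ^ 2 * lam / 2 * (Real.sqrt θ / Real.sqrt (ρ / P_d)) * (c₁ - c₀) <
        Real.log (B_u + α * B) - Real.log B_u := by
      rw [e, div_lt_iff₀ (by positivity), hlogdiv] at *
      linarith
    linarith
end
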